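/- arXiv:2205.02488 — 2 statements merged into one kernel-verified Lean document; each statement's English description precedes it below -/
import Mathlib

section
/- There exist infinitely many positive integers n such that n²+n+1 is square-free. -/
open Finset

private lemma aux_not_two_dvd (n : ℕ) : ¬ 2 ∣ (n ^ 2 + n + 1) := by
  have h := Nat.pow_mod n 2 2
  have h2 : n % 2 = 0 ∨ n % 2 = 1 := by omega
  rcases h2 with h2 | h2 <;> rw [h2] at h <;> omega

private lemma aux_not_nine_dvd (n : ℕ) : ¬ 9 ∣ (n ^ 2 + n + 1) := by
  intro h9
  have hm := Nat.pow_mod n 2 3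
  have h1 : n % 3 = 1 := by
    have h' : n % 3 = 0 ∨ n % 3 = 1 ∨ n % 3 = 2 := by omega
    rcases h' with h' | h' | h' <;> rw [h'] at hm <;> omega
  obtain ⟨k, rfl⟩ : ∃ k, n = 3 * k + 1 := ⟨n / 3, by omega⟩
  have he : (3 * k + 1) ^ 2 + (3 * k + 1) + 1 = 9 * (k ^ 2 + k) + 3 := by ring
  rw [he] at h9
  omega

private lemma aux_prime_mod {p n : ℕ} (hp : p.Prime) (h3 : p ≠ 3)
    (hdvd : p ∣ n ^ 2 + n + 1) : p % 3 = 1 := by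
  haveI := Fact.mk hp
  have ha : (n : ZMod p) ^ 2 + (n : ZMod p) + 1 = 0 := by
    have := (ZMod.natCast_eq_zero_iff (n ^ 2 + n + 1) p).mpr hdvd
    push_cast at this
    exact this
  have hne0 : (n : ZMod p) ≠ 0 := by
    intro h0
    rw [h0] at ha
    simp at ha
  have hne1 : (n : ZMod p) ≠ 1 := by
    intro h1
    rw [h1] at ha
    norm_num at ha
    have h3' : ((3 : ℕ) : ZMod p) = 0 := by push_cast; exact ha
    have := (ZMod.natCast_eq_zero_iff 3 p).mp h3'
    have := (Nat.prime_dvd_prime_iff_eq hp (by norm_num)).mp this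
    exact h3 this
  have hcube : (n : ZMod p) ^ 3 = 1 := by
    have he : (n : ZMod p) ^ 3 - 1 = ((n : ZMod p) - 1) * ((n : ZMod p) ^ 2 + n + 1) := by
      ring
    rw [ha, mul_zero] at he
    have := sub_eq_zero.mp he
    exact this
  have hord : orderOf (n : ZMod p) = 3 := by
    have hdvd3 : orderOf (n : ZMod p) ∣ 3 := orderOf_dvd_of_pow_eq_one hcube
    rcases (Nat.prime_three).eq_one_or_self_of_dvd _ hdvd3 with h | h
    · exact absurd (orderOf_eq_one_iff.mp h) hne1
    · exact h
  have hdvdp : orderOf (n : ZMod p) ∣ p - 1 := ZMod.orderOf_dvd_card_sub_one hne0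
  rw [hord] at hdvdp
  have := hp.two_le
  omega

private lemma aux_two_classes {p a b : ℕ} (hp : p.Prime) (h3 : p ≠ 3)
    (ha : p ^ 2 ∣ a ^ 2 + a + 1) (hb : p ^ 2 ∣ b ^ 2 + b + 1) :
    a ≡ b [MOD p ^ 2] ∨ p ^ 2 ∣ a + b + 1 := by
  have hpz : Prime (p : ℤ) := Nat.prime_iff_prime_int.mp hp
  have hA : (p : ℤ) ^ 2 ∣ (a : ℤ) ^ 2 + a + 1 := by exact_mod_cast ha
  have hB : (p : ℤ) ^ 2 ∣ (b : ℤ) ^ 2 + b + 1 := by exact_mod_cast hb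
  have hprod : (p : ℤ) ^ 2 ∣ ((a : ℤ) - b) * ((a : ℤ) + b + 1) := by
    have he : ((a : ℤ) - b) * ((a : ℤ) + b + 1)
        = ((a : ℤ) ^ 2 + a + 1) - ((b : ℤ) ^ 2 + b + 1) := by ring
    rw [he]
    exact dvd_sub hA hB
  by_cases hc : (p : ℤ) ∣ (a : ℤ) + b + 1
  · right
    have hnd : ¬ (p : ℤ) ∣ (a : ℤ) - b := by
      intro hd
      have h2a : (p : ℤ) ∣ 2 * a + 1 := by
        have hsum := dvd_add hc hd
        have he : (a : ℤ) + b + 1 + ((a : ℤ) - b) = 2 * a + 1 := by ring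
        rwa [he] at hsum
      have hfa : (p : ℤ) ∣ (a : ℤ) ^ 2 + a + 1 :=
        dvd_trans (dvd_pow_self (p : ℤ) two_ne_zero) hA
      have h3' : (p : ℤ) ∣ 3 := by
        have he : (3 : ℤ) = 4 * ((a : ℤ) ^ 2 + a + 1) - (2 * a + 1) * (2 * a + 1) := by ring
        rw [he]
        exact dvd_sub (hfa.mul_left 4) (h2a.mul_left _)
      have hn3 : p ∣ 3 := by exact_mod_cast h3'
      exact h3 ((Nat.prime_dvd_prime_iff_eq hp (by norm_num)).mp hn3)
    have hcop : IsCoprime ((p : ℤ) ^ 2) ((a : ℤ) - b) :=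
      ((hpz.coprime_iff_not_dvd).mpr hnd).pow_left
    have hd2 : (p : ℤ) ^ 2 ∣ (a : ℤ) + b + 1 := hcop.dvd_of_dvd_mul_left hprod
    have : ((p ^ 2 : ℕ) : ℤ) ∣ ((a + b + 1 : ℕ) : ℤ) := by push_cast; exact hd2
    exact_mod_cast this
  · left
    have hcop : IsCoprime ((p : ℤ) ^ 2) ((a : ℤ) + b + 1) :=
      ((hpz.coprime_iff_not_dvd).mpr hc).pow_left
    have hd2 : (p : ℤ) ^ 2 ∣ (a : ℤ) - b := hcop.dvd_of_dvd_mul_right hprod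
    rw [Nat.modEq_iff_dvd]
    have he : (b : ℤ) - a = -((a : ℤ) - b) := by ring
    push_cast
    rw [he]
    exact (dvd_neg).mpr hd2

private lemma aux_resclass_count (x m c : ℕ) :
    ((Finset.Icc 1 x).filter (fun n => n ≡ c [MOD m])).card ≤ x / m + 1 := by
  classical
  have h := Finset.card_le_card_of_injOn (fun n => n / m)
    (s := (Finset.Icc 1 x).filter (fun n => n ≡ c [MOD m])) (t := Finset.Iic (x / m))
    ?_ ?_
  · simpa using h
  · intro n hn
    simp only [Finset.coe_filter, Set.mem_setOf_eq, Finset.mem_Icc] at hn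
    simp only [Finset.coe_Iic, Set.mem_Iic]
    exact Nat.div_le_div_right hn.1.2
  · intro n hn n' hn' hdiv
    simp only [Finset.coe_filter, Set.mem_setOf_eq, Finset.mem_Icc] at hn hn'
    have h1 : n % m = n' % m := hn.2.trans hn'.2.symm
    have e1 := Nat.div_add_mod n m
    have e2 := Nat.div_add_mod n' m
    simp only at hdiv
    calc n = m * (n / m) + n % m := e1.symm
      _ = m * (n' / m) + n' % m := by rw [hdiv, h1]
      _ = n' := e2

private lemma aux_T_count {p : ℕ} (hp : p.Prime) (h3 : p ≠ 3) (x : ℕ) :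
    ((Finset.Icc 1 x).filter (fun n => p ^ 2 ∣ n ^ 2 + n + 1)).card
      ≤ 2 * (x / p ^ 2 + 1) := by
  classical
  set T := (Finset.Icc 1 x).filter (fun n => p ^ 2 ∣ n ^ 2 + n + 1) with hT
  rcases T.eq_empty_or_nonempty with hTe | ⟨n₀, hn₀⟩
  · rw [hTe]; simp
  have hn₀' : p ^ 2 ∣ n₀ ^ 2 + n₀ + 1 := (Finset.mem_filter.mp hn₀).2
  set A := (Finset.Icc 1 x).filter (fun n => n ≡ n₀ [MOD p ^ 2]) with hA
  set B := (Finset.Icc 1 x).filter (fun n => p ^ 2 ∣ n + n₀ + 1) with hB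
  have hsub : T ⊆ A ∪ B := by
    intro n hn
    have hnm := Finset.mem_filter.mp hn
    rcases aux_two_classes hp h3 hnm.2 hn₀' with h | h
    · exact Finset.mem_union_left _ (Finset.mem_filter.mpr ⟨hnm.1, h⟩)
    · exact Finset.mem_union_right _ (Finset.mem_filter.mpr ⟨hnm.1, h⟩)
  have hAcard : A.card ≤ x / p ^ 2 + 1 := aux_resclass_count x (p ^ 2) n₀
  have hBcard : B.card ≤ x / p ^ 2 + 1 := by
    rcases B.eq_empty_or_nonempty with hBe | ⟨n₁, hn₁⟩
    · rw [hBe]; simp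
    have hn₁' : p ^ 2 ∣ n₁ + n₀ + 1 := (Finset.mem_filter.mp hn₁).2
    have hsubB : B ⊆ (Finset.Icc 1 x).filter (fun n => n ≡ n₁ [MOD p ^ 2]) := by
      intro n hn
      have hnm := Finset.mem_filter.mp hn
      refine Finset.mem_filter.mpr ⟨hnm.1, ?_⟩
      rw [Nat.modEq_iff_dvd]
      have hd : ((p : ℤ)) ^ 2 ∣ ((n₁ : ℤ) + n₀ + 1) - ((n : ℤ) + n₀ + 1) := by
        have d1 : ((p ^ 2 : ℕ) : ℤ) ∣ ((n + n₀ + 1 : ℕ) : ℤ) := Int.natCast_dvd_natCast.mpr hnm.2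
        have d2 : ((p ^ 2 : ℕ) : ℤ) ∣ ((n₁ + n₀ + 1 : ℕ) : ℤ) := Int.natCast_dvd_natCast.mpr hn₁'
        push_cast at d1 d2
        exact dvd_sub d2 d1
      have he : ((n₁ : ℤ) + n₀ + 1) - ((n : ℤ) + n₀ + 1) = (n₁ : ℤ) - n := by ring
      rw [he] at hd
      push_cast
      exact hd
    calc B.card ≤ _ := Finset.card_le_card hsubB
      _ ≤ x / p ^ 2 + 1 := aux_resclass_count x (p ^ 2) n₁
  calc T.card ≤ (A ∪ B).card := Finset.card_le_card hsub
    _ ≤ A.card + B.card := Finset.card_union_le _ _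
    _ ≤ 2 * (x / p ^ 2 + 1) := by omega

private lemma aux_basel : ∀ J : ℕ, 1 ≤ J →
    (∑ j ∈ Finset.Icc 1 J, (1 : ℚ) / (j : ℚ) ^ 2) ≤ 2 - 1 / (J : ℚ) := by
  intro J
  induction J with
  | zero => intro h; exact absurd h (by omega)
  | succ J ih =>
    intro _
    rcases Nat.eq_zero_or_pos J with rfl | hJ
    · norm_num
    rw [Finset.sum_Icc_succ_top (by omega : 1 ≤ J + 1)]
    have hih := ih hJ
    have hJQ : (1 : ℚ) ≤ (J : ℚ) := by exact_mod_cast hJ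
    have hkey : (1 : ℚ) / ((J : ℚ) + 1) ^ 2 ≤ 1 / (J : ℚ) - 1 / ((J : ℚ) + 1) := by
      have hd : (1 : ℚ) / (J : ℚ) - 1 / ((J : ℚ) + 1) = 1 / ((J : ℚ) * ((J : ℚ) + 1)) := by
        field_simp
        ring
      rw [hd]
      apply one_div_le_one_div_of_le
      · nlinarith
      · nlinarith
    push_cast
    linarith

/-- There exist infinitely many positive integers `n` such that `n² + n + 1` is square-free. -/
theorem stmt1 : {n : ℕ | 0 < n ∧ Squarefree (n ^ 2 + n + 1)}.Infinite := by
  apply Set.infinite_of_forall_exists_gt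
  intro N
  classical
  by_contra hcon
  push_neg at hcon
  obtain ⟨x, hx⟩ : ∃ x, x = 9 * N + 18 := ⟨_, rfl⟩
  set Good := (Finset.Icc 1 x).filter (fun n => Squarefree (n ^ 2 + n + 1)) with hGood
  set Bad := (Finset.Icc 1 x).filter (fun n => ¬ Squarefree (n ^ 2 + n + 1)) with hBad
  have hcards : Good.card + Bad.card = x := by
    rw [hGood, hBad, Finset.card_filter_add_card_filter_not]
    simp
  have hGoodN : Good ⊆ Finset.Icc 1 N := by
    intro n hn
    have hnm := Finset.mem_filter.mp hn
    have h1 : 1 ≤ n := (Finset.mem_Icc.mp hnm.1).1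
    have := hcon n ⟨by omega, hnm.2⟩
    exact Finset.mem_Icc.mpr ⟨h1, this⟩
  have hGoodCard : Good.card ≤ N := by
    calc Good.card ≤ (Finset.Icc 1 N).card := Finset.card_le_card hGoodN
      _ = N := by simp
  have hBadBig : x - N ≤ Bad.card := by omega
  set P := (Finset.Icc 1 x).filter (fun p => p.Prime ∧ p % 6 = 1) with hP
  have hcover : Bad ⊆ P.biUnion
      (fun p => (Finset.Icc 1 x).filter (fun n => p ^ 2 ∣ n ^ 2 + n + 1)) := by
    intro n hn
    have hnm := Finset.mem_filter.mp hn
    have hn1 : 1 ≤ n := (Finset.mem_Icc.mp hnm.1).1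
    have hnx : n ≤ x := (Finset.mem_Icc.mp hnm.1).2
    obtain ⟨p, hp, hpd⟩ : ∃ p, p.Prime ∧ p * p ∣ n ^ 2 + n + 1 := by
      by_contra hno
      push_neg at hno
      exact hnm.2 (Nat.squarefree_iff_prime_squarefree.mpr fun q hq => hno q hq)
    have hpd2 : p ^ 2 ∣ n ^ 2 + n + 1 := by rwa [pow_two]
    have hp2 : p ≠ 2 := by
      rintro rfl
      exact aux_not_two_dvd n (dvd_trans (dvd_pow_self 2 two_ne_zero) hpd2)
    have hp3 : p ≠ 3 := by
      rintro rfl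
      exact aux_not_nine_dvd n (by simpa using hpd2)
    have hmod3 : p % 3 = 1 :=
      aux_prime_mod hp hp3 (dvd_trans (dvd_pow_self p two_ne_zero) hpd2)
    have hodd : p % 2 = 1 := by
      rcases hp.eq_two_or_odd with h | h
      · exact absurd h hp2
      · exact h
    have hmod6 : p % 6 = 1 := by omega
    have hple : p ^ 2 ≤ n ^ 2 + n + 1 := Nat.le_of_dvd (by positivity) hpd2
    have hpx : p ≤ x := by
      by_contra hgt
      push_neg at hgt
      have h1 : x + 1 ≤ p := hgt
      have h2 : (x + 1) ^ 2 ≤ p ^ 2 := Nat.pow_le_pow_left h1 2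
      have h3 : n ^ 2 ≤ x ^ 2 := Nat.pow_le_pow_left hnx 2
      have h4 : (x + 1) ^ 2 = x ^ 2 + 2 * x + 1 := by ring
      omega
    have hpP : p ∈ P := by
      rw [hP, Finset.mem_filter, Finset.mem_Icc]
      exact ⟨⟨hp.one_lt.le, hpx⟩, hp, hmod6⟩
    exact Finset.mem_biUnion.mpr ⟨p, hpP, Finset.mem_filter.mpr ⟨hnm.1, hpd2⟩⟩
  have hPfacts : ∀ p ∈ P, p.Prime ∧ p % 6 = 1 ∧ 7 ≤ p ∧ p ≤ x := by
    intro p hpP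
    rw [hP, Finset.mem_filter, Finset.mem_Icc] at hpP
    have h2 := hpP.2.1.two_le
    exact ⟨hpP.2.1, hpP.2.2, by omega, hpP.1.2⟩
  have hBadNat : Bad.card ≤ ∑ p ∈ P, 2 * (x / p ^ 2 + 1) := by
    calc Bad.card ≤ (P.biUnion _).card := Finset.card_le_card hcover
      _ ≤ ∑ p ∈ P, ((Finset.Icc 1 x).filter (fun n => p ^ 2 ∣ n ^ 2 + n + 1)).card :=
          Finset.card_biUnion_le
      _ ≤ ∑ p ∈ P, 2 * (x / p ^ 2 + 1) := by
          apply Finset.sum_le_sum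
          intro p hpP
          obtain ⟨hp, h6, h7, _⟩ := hPfacts p hpP
          exact aux_T_count hp (by omega) x
  -- pass to rationals
  have hQ1 : (Bad.card : ℚ) ≤ ∑ p ∈ P, (2 * ((x : ℚ) / (p : ℚ) ^ 2) + 2) := by
    have h0 : (Bad.card : ℚ) ≤ ((∑ p ∈ P, 2 * (x / p ^ 2 + 1) : ℕ) : ℚ) :=
      Nat.cast_le.mpr hBadNat
    refine h0.trans ?_
    rw [Nat.cast_sum]
    apply Finset.sum_le_sum
    intro p hpP
    have hcast : ((x / p ^ 2 : ℕ) : ℚ) ≤ (x : ℚ) / ((p : ℚ)) ^ 2 := by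
      exact_mod_cast Nat.cast_div_le (α := ℚ) (m := x) (n := p ^ 2)
    push_cast
    linarith
  have hsum1 : ∑ p ∈ P, (1 : ℚ) / (p : ℚ) ^ 2 ≤ 1 / 18 := by
    have hterm : ∀ p ∈ P, (1 : ℚ) / (p : ℚ) ^ 2 ≤ (1 : ℚ) / (36 * ((p / 6 : ℕ) : ℚ) ^ 2) := by
      intro p hpP
      obtain ⟨hp, h6, h7, _⟩ := hPfacts p hpP
      have hj1 : 1 ≤ p / 6 := by omega
      have hj2 : 6 * (p / 6) ≤ p := by omega
      have hsq : (6 * (p / 6)) ^ 2 ≤ p ^ 2 := Nat.pow_le_pow_left hj2 2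
      have hsqQ : (36 : ℚ) * ((p / 6 : ℕ) : ℚ) ^ 2 ≤ (p : ℚ) ^ 2 := by
        have := (Nat.cast_le (α := ℚ)).mpr hsq
        push_cast at this
        nlinarith [this]
      have hpos : (0 : ℚ) < 36 * ((p / 6 : ℕ) : ℚ) ^ 2 := by
        have : (1 : ℚ) ≤ ((p / 6 : ℕ) : ℚ) := by exact_mod_cast hj1
        nlinarith
      exact one_div_le_one_div_of_le hpos hsqQ
    have h1 : ∑ p ∈ P, (1 : ℚ) / (p : ℚ) ^ 2
        ≤ ∑ p ∈ P, (1 : ℚ) / (36 * ((p / 6 : ℕ) : ℚ) ^ 2) := Finset.sum_le_sum hterm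
    have hinj : ∀ p ∈ P, ∀ q ∈ P, p / 6 = q / 6 → p = q := by
      intro p hpP q hqP h
      obtain ⟨_, h6p, _, _⟩ := hPfacts p hpP
      obtain ⟨_, h6q, _, _⟩ := hPfacts q hqP
      omega
    have h2 : ∑ p ∈ P, (1 : ℚ) / (36 * ((p / 6 : ℕ) : ℚ) ^ 2)
        = ∑ j ∈ (P.image (· / 6) : Finset ℕ), (1 : ℚ) / (36 * (j : ℚ) ^ 2) :=
      (Finset.sum_image (f := fun j : ℕ => (1 : ℚ) / (36 * (j : ℚ) ^ 2)) hinj).symm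
    have hsubJ : P.image (· / 6) ⊆ Finset.Icc 1 (x / 6) := by
      intro j hj
      obtain ⟨p, hpP, rfl⟩ := Finset.mem_image.mp hj
      obtain ⟨_, _, h7, hxle⟩ := hPfacts p hpP
      exact Finset.mem_Icc.mpr ⟨by omega, Nat.div_le_div_right hxle⟩
    have h3 : ∑ j ∈ (P.image (· / 6) : Finset ℕ), (1 : ℚ) / (36 * (j : ℚ) ^ 2)
        ≤ ∑ j ∈ Finset.Icc 1 (x / 6), (1 : ℚ) / (36 * (j : ℚ) ^ 2) := by
      apply Finset.sum_le_sum_of_subset_of_nonneg hsubJ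
      intro j _ _
      positivity
    have h4 : ∑ j ∈ Finset.Icc 1 (x / 6), (1 : ℚ) / (36 * (j : ℚ) ^ 2)
        = (1 / 36) * ∑ j ∈ Finset.Icc 1 (x / 6), (1 : ℚ) / (j : ℚ) ^ 2 := by
      rw [Finset.mul_sum]
      apply Finset.sum_congr rfl
      intro j hj
      have hj1 : 1 ≤ j := (Finset.mem_Icc.mp hj).1
      have : ((j : ℚ)) ≠ 0 := by
        have : (1 : ℚ) ≤ (j : ℚ) := by exact_mod_cast hj1
        linarith
      field_simp
    have hJ1 : 1 ≤ x / 6 := by omega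
    have h5 : ∑ j ∈ Finset.Icc 1 (x / 6), (1 : ℚ) / (j : ℚ) ^ 2 ≤ 2 := by
      have := aux_basel (x / 6) hJ1
      have hpos : (0 : ℚ) < ((x / 6 : ℕ) : ℚ) := by
        have : (1 : ℚ) ≤ ((x / 6 : ℕ) : ℚ) := by exact_mod_cast hJ1
        linarith
      have h1J : 0 < 1 / ((x / 6 : ℕ) : ℚ) := by positivity
      linarith
    calc ∑ p ∈ P, (1 : ℚ) / (p : ℚ) ^ 2 ≤ _ := h1
      _ = _ := h2
      _ ≤ _ := h3
      _ = _ := h4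
      _ ≤ (1 / 36) * 2 := by
          have : (0 : ℚ) ≤ 1 / 36 := by norm_num
          nlinarith [h5]
      _ = 1 / 18 := by norm_num
  have hPcard : P.card ≤ x / 6 + 1 := by
    have hsub : P ⊆ (Finset.Icc 1 x).filter (fun n => n ≡ 7 [MOD 6]) := by
      intro p hpP
      obtain ⟨_, h6, _, _⟩ := hPfacts p hpP
      rw [hP, Finset.mem_filter] at hpP
      refine Finset.mem_filter.mpr ⟨hpP.1, ?_⟩
      show p % 6 = 7 % 6
      omega
    calc P.card ≤ _ := Finset.card_le_card hsub
      _ ≤ x / 6 + 1 := aux_resclass_count x 6 7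
  -- combine
  have hsplit : ∑ p ∈ P, (2 * ((x : ℚ) / (p : ℚ) ^ 2) + 2)
      = 2 * (x : ℚ) * (∑ p ∈ P, (1 : ℚ) / (p : ℚ) ^ 2) + 2 * P.card := by
    rw [Finset.sum_add_distrib, Finset.sum_const, Finset.mul_sum, nsmul_eq_mul]
    congr 1
    · apply Finset.sum_congr rfl
      intro p _
      ring
    · ring
  have hPcardQ : (P.card : ℚ) ≤ (x : ℚ) / 6 + 1 := by
    have h0 : (P.card : ℚ) ≤ ((x / 6 + 1 : ℕ) : ℚ) := Nat.cast_le.mpr hPcard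
    have hdc : ((x / 6 : ℕ) : ℚ) ≤ (x : ℚ) / 6 := by
      exact_mod_cast Nat.cast_div_le (α := ℚ) (m := x) (n := 6)
    push_cast at h0
    linarith
  have hxN : ((x - N : ℕ) : ℚ) = (x : ℚ) - N := by
    have : N ≤ x := by omega
    push_cast [this]
    ring
  have hBadQ : (x : ℚ) - N ≤ (Bad.card : ℚ) := by
    rw [← hxN]
    exact_mod_cast hBadBig
  have hxQ : (x : ℚ) = 9 * N + 18 := by
    rw [hx]; push_cast; ring
  have hsumnn : (0 : ℚ) ≤ ∑ p ∈ P, (1 : ℚ) / (p : ℚ) ^ 2 := by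
    apply Finset.sum_nonneg
    intro p _
    positivity
  have hxpos : (0 : ℚ) ≤ (x : ℚ) := by positivity
  have hfinal : (Bad.card : ℚ) ≤ (x : ℚ) / 9 + (x : ℚ) / 3 + 2 := by
    calc (Bad.card : ℚ) ≤ _ := hQ1
      _ = 2 * (x : ℚ) * (∑ p ∈ P, (1 : ℚ) / (p : ℚ) ^ 2) + 2 * P.card := hsplit
      _ ≤ 2 * (x : ℚ) * (1 / 18) + 2 * ((x : ℚ) / 6 + 1) := by
          have h1 : 2 * (x : ℚ) * (∑ p ∈ P, (1 : ℚ) / (p : ℚ) ^ 2) ≤ 2 * (x : ℚ) * (1 / 18) := by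
            apply mul_le_mul_of_nonneg_left hsum1 (by linarith)
          linarith [hPcardQ]
      _ = (x : ℚ) / 9 + (x : ℚ) / 3 + 2 := by ring
  have hN0 : (0 : ℚ) ≤ (N : ℚ) := by positivity
  rw [hxQ] at hBadQ hfinal
  linarith
end

section
/- Let n ≥ 7 be an integer with 3 ∤ n and let z be an integer with z² + z + 1 ≡ 0 (mod n). Then there exist a positive integer x and a nonzero integer y with gcd(x,y) = 1, x² + xy + y² = n and x ≡ z·y (mod n). -/
/-- Thue-type lemma: there is a nonzero pair `(x, y)` with small entries and
`x ≡ z y (mod n)`. -/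
lemma thue_aux (n z : ℤ) (hn : 7 ≤ n) :
    ∃ x y : ℤ, ¬(x = 0 ∧ y = 0) ∧ x ^ 2 ≤ n ∧ y ^ 2 ≤ n ∧ n ∣ x - z * y := by
  have hn0 : (0:ℤ) < n := by linarith
  set N := n.toNat with hNdef
  have hNn : (N : ℤ) = n := Int.toNat_of_nonneg hn0.le
  have hNpos : 0 < N := by omega
  haveI : NeZero N := ⟨by omega⟩
  set k := Nat.sqrt N with hk
  have hcard : Fintype.card (ZMod N) < Fintype.card (Fin (k + 1) × Fin (k + 1)) := by
    rw [ZMod.card, Fintype.card_prod, Fintype.card_fin]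
    exact Nat.lt_succ_sqrt N
  obtain ⟨p, q, hpq, hfeq⟩ :=
    Fintype.exists_ne_map_eq_of_card_lt
      (fun p : Fin (k + 1) × Fin (k + 1) =>
        ((p.1 : ℕ) : ZMod N) - z * ((p.2 : ℕ) : ZMod N)) hcard
  refine ⟨(p.1 : ℕ) - (q.1 : ℕ), (p.2 : ℕ) - (q.2 : ℕ), ?_, ?_, ?_, ?_⟩
  · rintro ⟨h1, h2⟩
    apply hpq
    have e1 : (p.1 : ℕ) = (q.1 : ℕ) := by exact_mod_cast sub_eq_zero.mp h1
    have e2 : (p.2 : ℕ) = (q.2 : ℕ) := by exact_mod_cast sub_eq_zero.mp h2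
    ext <;> [exact e1; exact e2]
  · have hb1 : (p.1 : ℕ) ≤ k := Nat.lt_succ_iff.mp p.1.isLt
    have hb2 : (q.1 : ℕ) ≤ k := Nat.lt_succ_iff.mp q.1.isLt
    have hkk : (k : ℤ) ^ 2 ≤ n := by
      rw [← hNn]
      have := Nat.sqrt_le' N
      exact_mod_cast this
    have h1 : ((p.1 : ℕ) : ℤ) ≤ k := by exact_mod_cast hb1
    have h2 : ((q.1 : ℕ) : ℤ) ≤ k := by exact_mod_cast hb2
    have h1' : (0:ℤ) ≤ ((p.1 : ℕ) : ℤ) := by positivity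
    have h2' : (0:ℤ) ≤ ((q.1 : ℕ) : ℤ) := by positivity
    nlinarith
  · have hb1 : (p.2 : ℕ) ≤ k := Nat.lt_succ_iff.mp p.2.isLt
    have hb2 : (q.2 : ℕ) ≤ k := Nat.lt_succ_iff.mp q.2.isLt
    have hkk : (k : ℤ) ^ 2 ≤ n := by
      rw [← hNn]
      have := Nat.sqrt_le' N
      exact_mod_cast this
    have h1 : ((p.2 : ℕ) : ℤ) ≤ k := by exact_mod_cast hb1
    have h2 : ((q.2 : ℕ) : ℤ) ≤ k := by exact_mod_cast hb2
    have h1' : (0:ℤ) ≤ ((p.2 : ℕ) : ℤ) := by positivity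
    have h2' : (0:ℤ) ≤ ((q.2 : ℕ) : ℤ) := by positivity
    nlinarith
  · rw [← hNn]
    apply (ZMod.intCast_zmod_eq_zero_iff_dvd _ N).mp
    push_cast
    rw [sub_eq_zero]
    linear_combination hfeq

/-- Surjectivity: if `n ≥ 7`, `3 ∤ n` and `z² + z + 1 ≡ 0 (mod n)`, then there exist a
positive integer `x` and a nonzero integer `y` with `gcd(x,y) = 1`, `x² + xy + y² = n`
and `x ≡ z y (mod n)`. -/
theorem stmt6 (n z : ℤ) (hn : 7 ≤ n) (h3 : ¬ (3 ∣ n)) (hz : n ∣ z ^ 2 + z + 1) :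
    ∃ x y : ℤ, 0 < x ∧ y ≠ 0 ∧ IsCoprime x y ∧ x ^ 2 + x * y + y ^ 2 = n ∧
      n ∣ x - z * y := by
  have hn0 : (0:ℤ) < n := by linarith
  obtain ⟨x, y, hxy0, hx2, hy2, hdvd⟩ := thue_aux n z hn
  -- n divides the form
  have hQdvd : n ∣ x ^ 2 + x * y + y ^ 2 := by
    have key : x ^ 2 + x * y + y ^ 2 =
        (x - z * y) * (x + (z + 1) * y) + y ^ 2 * (z ^ 2 + z + 1) := by ring
    rw [key]
    exact dvd_add (hdvd.mul_right _) (hz.mul_left _)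
  have hQpos : 0 < x ^ 2 + x * y + y ^ 2 := by
    rcases eq_or_ne x 0 with hx | hx
    · rcases eq_or_ne y 0 with hy | hy
      · exact absurd ⟨hx, hy⟩ hxy0
      · subst hx; have := pow_two_pos_of_ne_zero hy; nlinarith
    · have hx' := pow_two_pos_of_ne_zero hx
      nlinarith [sq_nonneg (2 * x + y), sq_nonneg y, sq_nonneg (x + y)]
  have hxyle : x * y ≤ n := by nlinarith [sq_nonneg (x - y)]
  have hQle : x ^ 2 + x * y + y ^ 2 ≤ 3 * n := by linarith
  obtain ⟨c, hc⟩ := hQdvd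
  have hc1 : 1 ≤ c := by nlinarith
  have hc3 : c ≤ 3 := by nlinarith
  -- n is odd
  have hnodd : ¬ (2:ℤ) ∣ n := by
    intro h2n
    obtain ⟨w, hw⟩ := Int.even_mul_succ_self z
    have hzz : z ^ 2 + z + 1 = 2 * w + 1 := by
      have h' : z * (z + 1) = z ^ 2 + z := by ring
      linarith [hw, h']
    obtain ⟨v, hv⟩ : (2:ℤ) ∣ 2 * w + 1 := hzz ▸ h2n.trans hz
    omega
  interval_cases c
  · -- c = 1 : the form equals n
    rw [mul_one] at hc
    have hx0 : x ≠ 0 := by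
      rintro rfl
      have hyy : y ^ 2 = n := by linarith
      have hy0 : y ≠ 0 := by rintro rfl; simp at hyy; omega
      have hzy : y ∣ z := by
        have h1 : n ∣ z * y := by
          have : (0:ℤ) - z * y = -(z * y) := by ring
          rw [this] at hdvd
          exact (dvd_neg).mp hdvd
        have h2 : y * y ∣ y * z := by
          rw [← hyy] at h1
          have : z * y = y * z := by ring
          rw [this] at h1
          calc y * y = y ^ 2 := by ring
            _ ∣ y * z := h1
        exact (mul_dvd_mul_iff_left hy0).mp h2
      obtain ⟨w, hw⟩ := hzy
      have hdvd1 : y ∣ 1 := by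
        obtain ⟨s, hs⟩ : y ^ 2 ∣ z ^ 2 + z + 1 := hyy ▸ hz
        have h5 : (y * w) ^ 2 + y * w + 1 = y ^ 2 * s := by rw [← hw]; exact hs
        exact ⟨y * s - y * w ^ 2 - w, by linear_combination h5⟩
      rcases Int.isUnit_iff.mp (isUnit_of_dvd_one hdvd1) with h | h <;>
        (subst h; simp at hyy; omega)
    have hy0 : y ≠ 0 := by
      rintro rfl
      have hxx : x ^ 2 = n := by linarith
      have hnx : n ∣ x := by simpa using hdvd
      have hx1 : x ∣ 1 := by
        have h2 : x * x ∣ x * 1 := by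
          rw [mul_one]
          calc x * x = x ^ 2 := by ring
            _ = n := hxx
            _ ∣ x := hnx
        exact (mul_dvd_mul_iff_left hx0).mp h2
      rcases Int.isUnit_iff.mp (isUnit_of_dvd_one hx1) with h | h <;>
        (subst h; simp at hxx; omega)
    have hcop : IsCoprime x y := by
      rw [Int.isCoprime_iff_gcd_eq_one]
      by_contra hne
      obtain ⟨r, hr, hrd⟩ := Nat.exists_prime_and_dvd hne
      have hrx : (r : ℤ) ∣ x := (Int.natCast_dvd_natCast.mpr hrd).trans (Int.gcd_dvd_left x y)
      have hry : (r : ℤ) ∣ y := (Int.natCast_dvd_natCast.mpr hrd).trans (Int.gcd_dvd_right x y)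
      obtain ⟨a, ha⟩ := hrx
      obtain ⟨b, hb⟩ := hry
      have hr2 : (2:ℤ) ≤ r := by exact_mod_cast hr.two_le
      have hr0 : (r:ℤ) ≠ 0 := by linarith
      set m : ℤ := a ^ 2 + a * b + b ^ 2 with hm
      have hnm : n = (r:ℤ) * ((r:ℤ) * m) := by
        rw [← hc, ha, hb, hm]; ring
      have hmpos : 0 < m := by
        by_contra hcon
        push_neg at hcon
        have hrnn : (0:ℤ) ≤ (r:ℤ) := by linarith
        nlinarith [mul_nonneg hrnn hrnn, hnm]
      have hdvd2 : (r:ℤ) * m ∣ a - z * b := by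
        have h1 : (r:ℤ) * ((r:ℤ) * m) ∣ (r:ℤ) * (a - z * b) := by
          rw [← hnm]
          have : (r:ℤ) * (a - z * b) = x - z * y := by rw [ha, hb]; ring
          rw [this]; exact hdvd
        exact (mul_dvd_mul_iff_left hr0).mp h1
      have hdvd3 : (r:ℤ) * m ∣ z ^ 2 + z + 1 := by
        refine dvd_trans ⟨r, by rw [hnm]; ring⟩ hz
      have hdvdm : (r:ℤ) * m ∣ m := by
        have key : m = (a - z * b) * (a + (z + 1) * b) + b ^ 2 * (z ^ 2 + z + 1) := by
          rw [hm]; ring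
        nth_rewrite 2 [key]
        exact dvd_add (hdvd2.mul_right _) (hdvd3.mul_left _)
      have := Int.le_of_dvd hmpos hdvdm
      nlinarith
    rcases lt_trichotomy 0 x with hx | hx | hx
    · exact ⟨x, y, hx, hy0, hcop, hc, hdvd⟩
    · exact absurd hx.symm hx0
    · refine ⟨-x, -y, by linarith, neg_ne_zero.mpr hy0, hcop.neg_left.neg_right, ?_, ?_⟩
      · have : (-x) ^ 2 + (-x) * (-y) + (-y) ^ 2 = x ^ 2 + x * y + y ^ 2 := by ring
        rw [this, hc]
      · have : -x - z * (-y) = -(x - z * y) := by ring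
        rw [this]; exact (dvd_neg).mpr hdvd
  · -- c = 2 : contradiction via parity
    exfalso
    obtain ⟨u, hu⟩ : ∃ u, n = 2 * u + 1 := by
      rcases Int.even_or_odd n with ⟨t, ht⟩ | ⟨t, ht⟩
      · exact absurd ⟨t, by omega⟩ hnodd
      · exact ⟨t, ht⟩
    rcases Int.even_or_odd x with ⟨a, ha⟩ | ⟨a, ha⟩ <;>
      rcases Int.even_or_odd y with ⟨b, hb⟩ | ⟨b, hb⟩
    · -- both even : 4 ∣ 2n, so 2 ∣ n
      have key : 4 * (a ^ 2 + a * b + b ^ 2) = n * 2 := by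
        rw [← hc, ha, hb]; ring
      set t := a ^ 2 + a * b + b ^ 2
      omega
    · have key : 2 * (2 * a ^ 2 + 2 * a * b + a + 2 * b ^ 2 + 2 * b) + 1 = n * 2 := by
        rw [← hc, ha, hb]; ring
      set t := 2 * a ^ 2 + 2 * a * b + a + 2 * b ^ 2 + 2 * b
      omega
    · have key : 2 * (2 * a ^ 2 + 2 * a * b + b + 2 * b ^ 2 + 2 * a) + 1 = n * 2 := by
        rw [← hc, ha, hb]; ring
      set t := 2 * a ^ 2 + 2 * a * b + b + 2 * b ^ 2 + 2 * a
      omega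
    · have key : 2 * (2 * a ^ 2 + 2 * a * b + a + b + 2 * b ^ 2 + 2 * a + 2 * b + 1) + 1
          = n * 2 := by
        rw [← hc, ha, hb]; ring
      set t := 2 * a ^ 2 + 2 * a * b + a + b + 2 * b ^ 2 + 2 * a + 2 * b + 1
      omega
  · -- c = 3 : forces n to be a small square
    exfalso
    have hx2' : x ^ 2 = n := by nlinarith
    have hy2' : y ^ 2 = n := by nlinarith
    have hxy' : x * y = n := by nlinarith
    have hxy : x = y := by nlinarith [sq_nonneg (x - y)]
    have hx0 : x ≠ 0 := by rintro rfl; simp at hx2'; omega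
    subst hxy
    have hdvd1 : x ∣ 1 - z := by
      have h1 : x * x ∣ x * (1 - z) := by
        have e1 : x * (1 - z) = x - z * x := by ring
        have e2 : x * x = n := by nlinarith
        rw [e1, e2]; exact hdvd
      exact (mul_dvd_mul_iff_left hx0).mp h1
    obtain ⟨t, ht⟩ := hdvd1
    have hx3 : x ∣ 3 := by
      have hxn : x ∣ z ^ 2 + z + 1 := by
        refine dvd_trans ⟨x, by nlinarith⟩ hz
      have hzv : z = 1 - x * t := by linarith
      obtain ⟨s, hs⟩ := hxn
      refine ⟨s + 3 * t - x * t ^ 2, ?_⟩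
      rw [hzv] at hs; nlinarith [hs]
    have habs : x.natAbs ∣ 3 := by
      have : x.natAbs ∣ (3:ℤ).natAbs := Int.natAbs_dvd_natAbs.mpr hx3
      simpa using this
    have hle : x.natAbs ≤ 3 := Nat.le_of_dvd (by norm_num) habs
    have hb1 : -3 ≤ x := by omega
    have hb2 : x ≤ 3 := by omega
    interval_cases x <;> omega
end
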